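/- Let N ≥ 1 be an integer, 0 < p < 1, and let μ̄, Δ⁻, Δ⁺, I, α⁺, α⁻ be as defined, with 0 ≤ μ̄ − Δ⁻ and μ̄ + Δ⁺ ≤ N. Let B_Δ(k; N, p) = B(k; N, p) / (∑_{j ∈ I} B(j; N, p)) for k ∈ I, and define transition probabilities on I by P(k, k+1) = α⁺(k)/4, P(k, k−1) = α⁻(k)/4, P(k, k) = 1 − α⁺(k)/4 − α⁻(k)/4, and P(j, k) = 0 whenever |j − k| > 1. Then B_Δ is a stationary distribution of this Markov chain: for every k ∈ I, ∑_{j ∈ I} B_Δ(j; N, p)·P(j, k) = B_Δ(k; N, p). -/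

import Mathlib

/-- Binomial probability mass function `B(k; N, p) = C(N,k)·p^k·(1-p)^(N-k)`. -/
noncomputable def binomialPMF (N : ℕ) (p : ℝ) (k : ℕ) : ℝ :=
  (N.choose k : ℝ) * p ^ k * (1 - p) ^ (N - k)

/-- The Metropolis acceptance function `α⁺`. -/
noncomputable def alphaPlus (N : ℕ) (p : ℝ) (μbar Δp : ℕ) (k : ℕ) : ℝ :=
  if k < μbar then 1
  else if k < μbar + Δp then ((N : ℝ) - k) / ((k : ℝ) + 1) * (p / (1 - p))
  else 0

/-- The Metropolis acceptance function `α⁻`. -/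
noncomputable def alphaMinus (N : ℕ) (p : ℝ) (μbar Δm : ℕ) (k : ℕ) : ℝ :=
  if μbar < k then 1
  else if μbar - Δm < k then (k : ℝ) / ((N : ℝ) - k + 1) * ((1 - p) / p)
  else 0

/-- The transition probabilities of the Metropolis chain on `I = [μ̄ - Δ⁻, μ̄ + Δ⁺]`. -/
noncomputable def metropolisTrans (N : ℕ) (p : ℝ) (μbar Δm Δp : ℕ) (j k : ℕ) : ℝ :=
  if k = j + 1 then alphaPlus N p μbar Δp j / 4
  else if j = k + 1 then alphaMinus N p μbar Δm j / 4
  else if j = k then 1 - alphaPlus N p μbar Δp j / 4 - alphaMinus N p μbar Δm j / 4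
  else 0

/-- One-step ratio identity for the binomial PMF. -/
lemma binom_step (N : ℕ) (p : ℝ) (j : ℕ) (hj : j < N) :
    binomialPMF N p (j+1) * ((j:ℝ)+1) * (1-p) = binomialPMF N p j * ((N:ℝ)-j) * p := by
  unfold binomialPMF
  have h3 : ((N.choose (j+1) : ℝ)) * ((j:ℝ)+1) = (N.choose j : ℝ) * ((N:ℝ) - j) := by
    have h := Nat.choose_succ_right_eq N j
    have := congrArg (Nat.cast : ℕ → ℝ) h
    push_cast [Nat.cast_sub hj.le] at this
    linarith [this]
  have hpow : (1 - p) ^ (N - (j+1)) * (1-p) = (1-p) ^ (N - j) := by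
    rw [← pow_succ]
    congr 1
    omega
  calc (N.choose (j+1) : ℝ) * p ^ (j+1) * (1 - p) ^ (N - (j+1)) * ((j:ℝ)+1) * (1-p)
      = ((N.choose (j+1) : ℝ) * ((j:ℝ)+1)) * p ^ (j+1) * ((1 - p) ^ (N - (j+1)) * (1-p)) := by
        ring
    _ = ((N.choose j : ℝ) * ((N:ℝ)-j)) * (p ^ j * p) * (1-p)^(N-j) := by
        rw [h3, hpow, pow_succ]
    _ = (N.choose j : ℝ) * p ^ j * (1 - p) ^ (N - j) * ((N:ℝ)-j) * p := by ring

/-- Detailed balance for the Metropolis acceptance functions. -/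
lemma db (N : ℕ) (p : ℝ) (hp0 : 0 < p) (hp1 : p < 1)
    (μbar Δm Δp : ℕ) (hhi : μbar + Δp ≤ N) (j : ℕ)
    (hlo : μbar - Δm ≤ j) (hj : j < μbar + Δp) :
    binomialPMF N p j * alphaPlus N p μbar Δp j
      = binomialPMF N p (j+1) * alphaMinus N p μbar Δm (j+1) := by
  have hjN : j < N := lt_of_lt_of_le hj hhi
  have key := binom_step N p j hjN
  have hp1' : (0:ℝ) < 1 - p := by linarith
  have hNj : (0:ℝ) < (N:ℝ) - j := by
    have : (j:ℝ) < N := by exact_mod_cast hjN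
    linarith
  have hcast : ((N:ℝ) - (↑(j+1):ℝ) + 1) = (N:ℝ) - j := by push_cast; ring
  unfold alphaPlus alphaMinus
  rcases lt_or_ge j μbar with h | h
  · rw [if_pos h, if_neg (by omega : ¬ μbar < j + 1), if_pos (by omega : μbar - Δm < j + 1),
      hcast]
    push_cast
    field_simp
    nlinarith [key]
  · rw [if_neg (by omega : ¬ j < μbar), if_pos hj, if_pos (by omega : μbar < j + 1)]
    field_simp
    nlinarith [key]

lemma alphaMinus_lo (N : ℕ) (p : ℝ) (μbar Δm : ℕ) :
    alphaMinus N p μbar Δm (μbar - Δm) = 0 := by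
  unfold alphaMinus
  rw [if_neg (by omega), if_neg (by omega)]

lemma alphaPlus_hi (N : ℕ) (p : ℝ) (μbar Δp : ℕ) :
    alphaPlus N p μbar Δp (μbar + Δp) = 0 := by
  unfold alphaPlus
  rw [if_neg (by omega), if_neg (by omega)]

/-- Unnormalized stationarity: `∑_j B(j)·P(j,k) = B(k)` for `k ∈ I`. -/
theorem main_sum
    (N : ℕ) (p : ℝ) (hp0 : 0 < p) (hp1 : p < 1)
    (μbar Δm Δp : ℕ) (hΔp : μbar + Δp ≤ N)
    (k : ℕ) (hk : k ∈ Finset.Icc (μbar - Δm) (μbar + Δp)) :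
    ∑ j ∈ Finset.Icc (μbar - Δm) (μbar + Δp),
        binomialPMF N p j * metropolisTrans N p μbar Δm Δp j k = binomialPMF N p k := by
  set lo := μbar - Δm with hlo
  set hi := μbar + Δp with hhi
  rw [Finset.mem_Icc] at hk
  set B := binomialPMF N p with hB
  set ap := alphaPlus N p μbar Δp with hap
  set am := alphaMinus N p μbar Δm with ham
  have decomp : ∀ j, B j * metropolisTrans N p μbar Δm Δp j k
      = (if k = j + 1 then B j * ap j / 4 else 0)
        + (if j = k + 1 then B j * am j / 4 else 0)
        + (if j = k then B j * (1 - ap j / 4 - am j / 4) else 0) := by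
    intro j
    unfold metropolisTrans
    by_cases h1 : k = j + 1
    · rw [if_pos h1, if_pos h1, if_neg (by omega), if_neg (by omega)]; ring
    · rw [if_neg h1, if_neg h1]
      by_cases h2 : j = k + 1
      · rw [if_pos h2, if_pos h2, if_neg (by omega)]; ring
      · rw [if_neg h2, if_neg h2]
        by_cases h3 : j = k
        · rw [if_pos h3, if_pos h3]; ring
        · rw [if_neg h3, if_neg h3]; ring
  simp only [decomp]
  rw [Finset.sum_add_distrib, Finset.sum_add_distrib]
  have T1 : (∑ j ∈ Finset.Icc lo hi, if k = j + 1 then B j * ap j / 4 else 0)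
      = B k * am k / 4 := by
    rcases eq_or_lt_of_le hk.1 with h | h
    · have h0 : am lo = 0 := alphaMinus_lo N p μbar Δm
      rw [← h, h0]
      rw [Finset.sum_eq_zero]
      · ring
      · intro j hj
        rw [Finset.mem_Icc] at hj
        rw [if_neg (by omega)]
    · obtain ⟨m, rfl⟩ : ∃ m, k = m + 1 := ⟨k - 1, by omega⟩
      have hcond : ∀ j : ℕ, (m + 1 = j + 1) = (j = m) := by
        intro j; exact propext (by omega)
      simp only [hcond]
      rw [Finset.sum_ite_eq' (Finset.Icc lo hi) m (fun j => B j * ap j / 4),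
        if_pos (Finset.mem_Icc.mpr ⟨by omega, by omega⟩)]
      have := db N p hp0 hp1 μbar Δm Δp hΔp m (by omega) (by omega)
      rw [← hB, ← hap, ← ham] at this
      rw [this]
  have T2 : (∑ j ∈ Finset.Icc lo hi, if j = k + 1 then B j * am j / 4 else 0)
      = B k * ap k / 4 := by
    rw [Finset.sum_ite_eq' (Finset.Icc lo hi) (k+1) (fun j => B j * am j / 4)]
    rcases eq_or_lt_of_le hk.2 with h | h
    · have h0 : ap hi = 0 := alphaPlus_hi N p μbar Δp
      rw [if_neg (by rw [Finset.mem_Icc]; omega), h, h0]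
      ring
    · rw [if_pos (Finset.mem_Icc.mpr ⟨by omega, by omega⟩)]
      have := db N p hp0 hp1 μbar Δm Δp hΔp k (by omega) (by omega)
      rw [← hB, ← hap, ← ham] at this
      rw [← this]
  have T3 : (∑ j ∈ Finset.Icc lo hi, if j = k then B j * (1 - ap j / 4 - am j / 4) else 0)
      = B k * (1 - ap k / 4 - am k / 4) := by
    rw [Finset.sum_ite_eq' (Finset.Icc lo hi) k
        (fun j => B j * (1 - ap j / 4 - am j / 4)),
      if_pos (Finset.mem_Icc.mpr ⟨hk.1, hk.2⟩)]
  rw [T1, T2, T3]; ring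

/-- The truncated binomial distribution
`B_Δ(k; N, p) = B(k; N, p)/∑_{j ∈ I} B(j; N, p)` is a stationary distribution of the
Metropolis chain: for every `k ∈ I`, `∑_{j ∈ I} B_Δ(j; N, p)·P(j, k) = B_Δ(k; N, p)`. -/
theorem metropolis_stationary
    (N : ℕ) (hN : 1 ≤ N) (p : ℝ) (hp0 : 0 < p) (hp1 : p < 1)
    (μbar Δm Δp : ℕ)
    (hμbar : μbar =
      if (N : ℝ) * p - ⌊(N : ℝ) * p⌋₊ ≤ 1 - p then ⌊(N : ℝ) * p⌋₊ else ⌈(N : ℝ) * p⌉₊)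
    (hΔm : Δm ≤ μbar) (hΔp : μbar + Δp ≤ N) :
    ∀ k ∈ Finset.Icc (μbar - Δm) (μbar + Δp),
      ∑ j ∈ Finset.Icc (μbar - Δm) (μbar + Δp),
          (binomialPMF N p j / ∑ i ∈ Finset.Icc (μbar - Δm) (μbar + Δp), binomialPMF N p i) *
            metropolisTrans N p μbar Δm Δp j k =
        binomialPMF N p k / ∑ i ∈ Finset.Icc (μbar - Δm) (μbar + Δp), binomialPMF N p i := by
  intro k hk
  have main := main_sum N p hp0 hp1 μbar Δm Δp hΔp k hk
  rw [← main, Finset.sum_div]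
  exact Finset.sum_congr rfl fun j _ => by ring
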